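/- If D is stable, then there is a positive constant d > 0 such that for every continuous h: [0,∞) → ℝ^m with h(0) = 0 and every continuous x: ℝ → ℝ^m with x(s) = 0 for all s ≤ 0 and Dx_t = h(t) for all t ≥ 0, one has ‖x(t)‖ ≤ d · sup_{0≤u≤t} ‖h(u)‖ for each t ≥ 0. -/

import Mathlib

open MeasureTheory Filter Set

/-- `x` is bounded and uniformly continuous on `(-∞,0]` (membership in `BU`,
where only the restriction of `x` to `(-∞,0]` is relevant). -/
def IsBU (m : ℕ) (x : ℝ → Fin m → ℝ) : Prop :=
  (∃ C : ℝ, ∀ s : ℝ, s ≤ 0 → ‖x s‖ ≤ C) ∧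
  ∀ ε > (0:ℝ), ∃ δ > (0:ℝ), ∀ s : ℝ, s ≤ 0 → ∀ s' : ℝ, s' ≤ 0 →
    |s - s'| < δ → ‖x s - x s'‖ < ε

/-- the supremum norm `‖x‖_∞ = sup_{s ≤ 0} ‖x(s)‖`. -/
noncomputable def supNorm (m : ℕ) (x : ℝ → Fin m → ℝ) : ℝ :=
  ⨆ s : Set.Iic (0:ℝ), ‖x (s : ℝ)‖

/-- time shift: `shift m x t = x_t`, where `x_t(s) = x(t+s)`. -/
def shift (m : ℕ) (x : ℝ → Fin m → ℝ) (t : ℝ) : ℝ → Fin m → ℝ :=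
  fun s => x (t + s)

/-- The operator `Dx = x(0) - ∫_{-∞}^0 [dν(s)] x(s)`, where the matrix of real
(signed) Borel measures `ν` is given through a positive part `νp` and a
negative part `νn` (Jordan decomposition), i.e. `ν i j = νp i j - νn i j`. -/
noncomputable def Dop (m : ℕ) (νp νn : Fin m → Fin m → Measure ℝ)
    (x : ℝ → Fin m → ℝ) : Fin m → ℝ :=
  fun i => x 0 i - ∑ j : Fin m,
    ((∫ s in Set.Iic (0:ℝ), x s j ∂(νp i j)) - ∫ s in Set.Iic (0:ℝ), x s j ∂(νn i j))

/-- the measures `ν_ij` have finite total variation and `|ν_ij|({0}) = 0`. -/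
def NuCond (m : ℕ) (νp νn : Fin m → Fin m → Measure ℝ) : Prop :=
  (∀ i j, νp i j Set.univ ≠ ⊤) ∧ (∀ i j, νn i j Set.univ ≠ ⊤) ∧
  (∀ i j, νp i j {0} = 0) ∧ (∀ i j, νn i j {0} = 0)

/-- `D` is stable: there is a continuous `c : [0,∞) → [0,∞)` with `c(t) → 0`
as `t → ∞` such that every continuous `x : ℝ → ℝ^m` with `x_0 ∈ BU` and
`D x_t = 0` for all `t ≥ 0` satisfies `‖x(t)‖ ≤ c(t) ‖x_0‖_∞` for all `t ≥ 0`. -/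
def IsStableOp (m : ℕ) (D : (ℝ → Fin m → ℝ) → Fin m → ℝ) : Prop :=
  ∃ c : ℝ → ℝ, ContinuousOn c (Set.Ici 0) ∧ (∀ t : ℝ, 0 ≤ t → 0 ≤ c t) ∧
    Filter.Tendsto c Filter.atTop (nhds 0) ∧
    ∀ x : ℝ → Fin m → ℝ, Continuous x → IsBU m x →
      (∀ t : ℝ, 0 ≤ t → D (shift m x t) = 0) →
      ∀ t : ℝ, 0 ≤ t → ‖x t‖ ≤ c t * supNorm m x

/-- the convolution operator `D̂`, `(D̂x)(s) = D x_s`. -/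
noncomputable def Dhat (m : ℕ) (νp νn : Fin m → Fin m → Measure ℝ)
    (x : ℝ → Fin m → ℝ) : ℝ → Fin m → ℝ :=
  fun s => Dop m νp νn (shift m x s)

/-- the seminorm `‖x‖_n = sup_{s ∈ [-n,0]} ‖x(s)‖`. -/
noncomputable def normOn (m : ℕ) (n : ℕ) (x : ℝ → Fin m → ℝ) : ℝ :=
  ⨆ s : Set.Icc (-(n:ℝ)) 0, ‖x (s : ℝ)‖

/-- the compact-open metric
`d(x,y) = ∑_{n ≥ 1} 2⁻ⁿ ‖x-y‖_n / (1 + ‖x-y‖_n)`. -/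
noncomputable def coDist (m : ℕ) (x y : ℝ → Fin m → ℝ) : ℝ :=
  ∑' n : ℕ, (1/2 : ℝ)^(n+1) *
    (normOn m (n+1) (fun s => x s - y s)) / (1 + normOn m (n+1) (fun s => x s - y s))

/-- `sup_{0 ≤ u ≤ t} ‖h(u)‖`. -/
noncomputable def supOn (m : ℕ) (h : ℝ → Fin m → ℝ) (t : ℝ) : ℝ :=
  ⨆ u : Set.Icc (0:ℝ) t, ‖h (u : ℝ)‖

/-- the order `x ≤_D y`, i.e. `D x_s ≤ D y_s` (componentwise) for all `s ≤ 0`. -/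
def leD (m : ℕ) (νp νn : Fin m → Fin m → Measure ℝ) (x y : ℝ → Fin m → ℝ) : Prop :=
  ∀ s : ℝ, s ≤ 0 → ∀ i, Dhat m νp νn x s i ≤ Dhat m νp νn y s i

open Topology BoundedContinuousFunction

section Aux

variable {m : ℕ}

/-- the integral part of `Dop`. -/
noncomputable def Nint (νp νn : Fin m → Fin m → Measure ℝ) (w : ℝ → Fin m → ℝ) (i : Fin m) : ℝ :=
  ∑ j : Fin m, ((∫ s in Set.Iic (0:ℝ), w s j ∂(νp i j)) - ∫ s in Set.Iic (0:ℝ), w s j ∂(νn i j))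

lemma Dop_apply (νp νn : Fin m → Fin m → Measure ℝ) (w : ℝ → Fin m → ℝ) (i : Fin m) :
    Dop m νp νn w i = w 0 i - Nint νp νn w i := rfl

noncomputable def qVal (νp νn : Fin m → Fin m → Measure ℝ) (γ : ℝ) : ℝ :=
  ∑ i : Fin m, ∑ j : Fin m,
    ((∫ s in Set.Iic (0:ℝ), Real.exp (γ * s) ∂(νp i j)) +
      ∫ s in Set.Iic (0:ℝ), Real.exp (γ * s) ∂(νn i j))

noncomputable def VVal (νp νn : Fin m → Fin m → Measure ℝ) : ℝ :=
  ∑ i : Fin m, ∑ j : Fin m, (((νp i j) (Set.Iic 0)).toReal + ((νn i j) (Set.Iic 0)).toReal)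

lemma integrableOn_ray (μ : Measure ℝ) [IsFiniteMeasure μ] {f : ℝ → ℝ} (hf : Continuous f)
    {C : ℝ} (hb : ∀ s ≤ (0:ℝ), |f s| ≤ C) : IntegrableOn f (Set.Iic 0) μ := by
  refine Integrable.mono' (integrable_const C) hf.aestronglyMeasurable.restrict ?_
  refine (ae_restrict_iff' measurableSet_Iic).2 (ae_of_all _ fun s hs => ?_)
  simpa [Real.norm_eq_abs] using hb s hs

lemma exp_integrableOn (μ : Measure ℝ) [IsFiniteMeasure μ] {γ : ℝ} (hγ : 0 ≤ γ) :
    IntegrableOn (fun s => Real.exp (γ * s)) (Set.Iic 0) μ := by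
  refine integrableOn_ray μ (Real.continuous_exp.comp (continuous_const.mul continuous_id)) (C := 1) ?_
  intro s hs
  rw [abs_of_pos (Real.exp_pos _)]
  calc Real.exp (γ * s) ≤ Real.exp 0 := Real.exp_le_exp.2 (mul_nonpos_iff.2 (Or.inl ⟨hγ, hs⟩))
  _ = 1 := Real.exp_zero

lemma exp_setIntegral_nonneg (μ : Measure ℝ) (γ : ℝ) :
    0 ≤ ∫ s in Set.Iic (0:ℝ), Real.exp (γ * s) ∂μ :=
  setIntegral_nonneg measurableSet_Iic fun s _ => (Real.exp_pos _).le

lemma qVal_nonneg (νp νn : Fin m → Fin m → Measure ℝ) (γ : ℝ) : 0 ≤ qVal νp νn γ :=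
  Finset.sum_nonneg fun i _ => Finset.sum_nonneg fun j _ =>
    add_nonneg (exp_setIntegral_nonneg _ _) (exp_setIntegral_nonneg _ _)

lemma VVal_nonneg (νp νn : Fin m → Fin m → Measure ℝ) : 0 ≤ VVal νp νn :=
  Finset.sum_nonneg fun i _ => Finset.sum_nonneg fun j _ =>
    add_nonneg ENNReal.toReal_nonneg ENNReal.toReal_nonneg

/-- single measure split estimate -/
lemma setInt_split (μ : Measure ℝ) [IsFiniteMeasure μ] {f : ℝ → ℝ} (hf : Continuous f)
    {γ a C1 C2 : ℝ} (hγ : 0 ≤ γ) (ha : a ≤ 0) (hC1 : 0 ≤ C1) (hC2 : 0 ≤ C2)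
    (h1 : ∀ s ≤ a, |f s| ≤ C1) (h2 : ∀ s ∈ Set.Ioc a (0:ℝ), |f s| ≤ C2 * Real.exp (γ * s)) :
    |∫ s in Set.Iic (0:ℝ), f s ∂μ| ≤
      C1 * (μ (Set.Iic 0)).toReal + C2 * ∫ s in Set.Iic (0:ℝ), Real.exp (γ * s) ∂μ := by
  have hexp1 : ∀ s ≤ (0:ℝ), Real.exp (γ * s) ≤ 1 := by
    intro s hs
    calc Real.exp (γ * s) ≤ Real.exp 0 := Real.exp_le_exp.2 (mul_nonpos_iff.2 (Or.inl ⟨hγ, hs⟩))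
    _ = 1 := Real.exp_zero
  have hbound : ∀ s ≤ (0:ℝ), |f s| ≤ max C1 C2 := by
    intro s hs
    rcases le_or_gt s a with hsa | hsa
    · exact (h1 s hsa).trans (le_max_left _ _)
    · refine (h2 s ⟨hsa, hs⟩).trans ?_
      have := hexp1 s hs
      have : C2 * Real.exp (γ * s) ≤ C2 := by nlinarith
      exact this.trans (le_max_right _ _)
  have hint : IntegrableOn f (Set.Iic 0) μ := integrableOn_ray μ hf hbound
  have hintexp : IntegrableOn (fun s => Real.exp (γ * s)) (Set.Iic 0) μ := exp_integrableOn μ hγ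
  have hsub1 : Set.Iic a ⊆ Set.Iic (0:ℝ) := Set.Iic_subset_Iic.2 ha
  have hsub2 : Set.Ioc a (0:ℝ) ⊆ Set.Iic 0 := Set.Ioc_subset_Iic_self
  have hsplit : Set.Iic (0:ℝ) = Set.Iic a ∪ Set.Ioc a 0 := (Set.Iic_union_Ioc_eq_Iic ha).symm
  have hdisj : Disjoint (Set.Iic a) (Set.Ioc a (0:ℝ)) := Set.Iic_disjoint_Ioc le_rfl
  have heq : (∫ s in Set.Iic (0:ℝ), f s ∂μ) =
      (∫ s in Set.Iic a, f s ∂μ) + ∫ s in Set.Ioc a 0, f s ∂μ := by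
    rw [hsplit]
    exact setIntegral_union hdisj measurableSet_Ioc (hint.mono_set hsub1) (hint.mono_set hsub2)
  have e1 : |∫ s in Set.Iic a, f s ∂μ| ≤ C1 * (μ (Set.Iic 0)).toReal := by
    have t1 : |∫ s in Set.Iic a, f s ∂μ| ≤ ∫ s in Set.Iic a, |f s| ∂μ := by
      simpa [Real.norm_eq_abs] using norm_integral_le_integral_norm (μ := μ.restrict (Set.Iic a)) f
    have t2 : (∫ s in Set.Iic a, |f s| ∂μ) ≤ ∫ _ in Set.Iic a, C1 ∂μ := by
      refine setIntegral_mono_on ((hint.mono_set hsub1).abs) ?_ measurableSet_Iic ?_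
      · exact integrableOn_const (measure_ne_top _ _)
      · exact fun s hs => h1 s hs
    have t3 : (∫ _ in Set.Iic a, C1 ∂μ) = (μ (Set.Iic a)).toReal * C1 := by
      rw [setIntegral_const, smul_eq_mul]; rfl
    have t4 : (μ (Set.Iic a)).toReal * C1 ≤ (μ (Set.Iic 0)).toReal * C1 := by
      refine mul_le_mul_of_nonneg_right ?_ hC1
      exact (ENNReal.toReal_le_toReal (measure_ne_top _ _) (measure_ne_top _ _)).2
        (measure_mono hsub1)
    calc |∫ s in Set.Iic a, f s ∂μ| ≤ ∫ s in Set.Iic a, |f s| ∂μ := t1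
    _ ≤ ∫ _ in Set.Iic a, C1 ∂μ := t2
    _ = (μ (Set.Iic a)).toReal * C1 := t3
    _ ≤ (μ (Set.Iic 0)).toReal * C1 := t4
    _ = C1 * (μ (Set.Iic 0)).toReal := mul_comm _ _
  have e2 : |∫ s in Set.Ioc a 0, f s ∂μ| ≤ C2 * ∫ s in Set.Iic (0:ℝ), Real.exp (γ * s) ∂μ := by
    have t1 : |∫ s in Set.Ioc a 0, f s ∂μ| ≤ ∫ s in Set.Ioc a 0, |f s| ∂μ := by
      simpa [Real.norm_eq_abs] using norm_integral_le_integral_norm (μ := μ.restrict (Set.Ioc a 0)) f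
    have t2 : (∫ s in Set.Ioc a 0, |f s| ∂μ) ≤ ∫ s in Set.Ioc a 0, C2 * Real.exp (γ * s) ∂μ := by
      refine setIntegral_mono_on ((hint.mono_set hsub2).abs) ?_ measurableSet_Ioc h2
      exact (hintexp.mono_set hsub2).const_mul _
    have t3 : (∫ s in Set.Ioc a 0, C2 * Real.exp (γ * s) ∂μ)
        = C2 * ∫ s in Set.Ioc a 0, Real.exp (γ * s) ∂μ := by rw [integral_const_mul]
    have t4 : C2 * (∫ s in Set.Ioc a 0, Real.exp (γ * s) ∂μ)
        ≤ C2 * ∫ s in Set.Iic (0:ℝ), Real.exp (γ * s) ∂μ := by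
      refine mul_le_mul_of_nonneg_left ?_ hC2
      refine setIntegral_mono_set hintexp ?_ (HasSubset.Subset.eventuallyLE hsub2)
      exact ae_of_all _ fun s => (Real.exp_pos _).le
    calc |∫ s in Set.Ioc a 0, f s ∂μ| ≤ ∫ s in Set.Ioc a 0, |f s| ∂μ := t1
    _ ≤ ∫ s in Set.Ioc a 0, C2 * Real.exp (γ * s) ∂μ := t2
    _ = C2 * ∫ s in Set.Ioc a 0, Real.exp (γ * s) ∂μ := t3
    _ ≤ C2 * ∫ s in Set.Iic (0:ℝ), Real.exp (γ * s) ∂μ := t4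
  calc |∫ s in Set.Iic (0:ℝ), f s ∂μ| ≤ |∫ s in Set.Iic a, f s ∂μ| + |∫ s in Set.Ioc a 0, f s ∂μ| := by
        rw [heq]; exact abs_add_le _ _
  _ ≤ _ := add_le_add e1 e2

end Aux

section Aux2

variable {m : ℕ}

lemma Nint_bound_split (νp νn : Fin m → Fin m → Measure ℝ)
    (hfp : ∀ i j, IsFiniteMeasure (νp i j)) (hfn : ∀ i j, IsFiniteMeasure (νn i j))
    {w : ℝ → Fin m → ℝ} (hw : Continuous w) {γ a C1 C2 : ℝ}
    (hγ : 0 ≤ γ) (ha : a ≤ 0) (hC1 : 0 ≤ C1) (hC2 : 0 ≤ C2)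
    (h1 : ∀ s ≤ a, ‖w s‖ ≤ C1) (h2 : ∀ s ∈ Set.Ioc a (0:ℝ), ‖w s‖ ≤ C2 * Real.exp (γ * s))
    (i : Fin m) :
    |Nint νp νn w i| ≤ C1 * VVal νp νn + C2 * qVal νp νn γ := by
  have hterm : ∀ j : Fin m,
      |(∫ s in Set.Iic (0:ℝ), w s j ∂(νp i j)) - ∫ s in Set.Iic (0:ℝ), w s j ∂(νn i j)| ≤
        C1 * (((νp i j) (Set.Iic 0)).toReal + ((νn i j) (Set.Iic 0)).toReal) +
        C2 * ((∫ s in Set.Iic (0:ℝ), Real.exp (γ * s) ∂(νp i j)) +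
          ∫ s in Set.Iic (0:ℝ), Real.exp (γ * s) ∂(νn i j)) := by
    intro j
    haveI := hfp i j; haveI := hfn i j
    have hwj : Continuous fun s => w s j := (continuous_apply j).comp hw
    have h1' : ∀ s ≤ a, |w s j| ≤ C1 := fun s hs => by
      calc |w s j| ≤ ‖w s‖ := by
            simpa [Real.norm_eq_abs] using norm_le_pi_norm (w s) j
      _ ≤ C1 := h1 s hs
    have h2' : ∀ s ∈ Set.Ioc a (0:ℝ), |w s j| ≤ C2 * Real.exp (γ * s) := fun s hs => by
      calc |w s j| ≤ ‖w s‖ := by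
            simpa [Real.norm_eq_abs] using norm_le_pi_norm (w s) j
      _ ≤ C2 * Real.exp (γ * s) := h2 s hs
    have hp := setInt_split (νp i j) hwj hγ ha hC1 hC2 h1' h2'
    have hn := setInt_split (νn i j) hwj hγ ha hC1 hC2 h1' h2'
    have := abs_sub _ _ |>.trans (add_le_add hp hn)
    · linarith [this]
  have hsum : |Nint νp νn w i| ≤ ∑ j : Fin m,
      (C1 * (((νp i j) (Set.Iic 0)).toReal + ((νn i j) (Set.Iic 0)).toReal) +
        C2 * ((∫ s in Set.Iic (0:ℝ), Real.exp (γ * s) ∂(νp i j)) +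
          ∫ s in Set.Iic (0:ℝ), Real.exp (γ * s) ∂(νn i j))) := by
    refine (Finset.abs_sum_le_sum_abs _ _).trans ?_
    exact Finset.sum_le_sum fun j _ => hterm j
  refine hsum.trans ?_
  rw [Finset.sum_add_distrib, ← Finset.mul_sum, ← Finset.mul_sum]
  have hV : (∑ j : Fin m, (((νp i j) (Set.Iic 0)).toReal + ((νn i j) (Set.Iic 0)).toReal))
      ≤ VVal νp νn := by
    refine Finset.single_le_sum (f := fun i' => ∑ j : Fin m,
      (((νp i' j) (Set.Iic 0)).toReal + ((νn i' j) (Set.Iic 0)).toReal)) ?_ (Finset.mem_univ i)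
    exact fun i' _ => Finset.sum_nonneg fun j _ =>
      add_nonneg ENNReal.toReal_nonneg ENNReal.toReal_nonneg
  have hq : (∑ j : Fin m, ((∫ s in Set.Iic (0:ℝ), Real.exp (γ * s) ∂(νp i j)) +
        ∫ s in Set.Iic (0:ℝ), Real.exp (γ * s) ∂(νn i j))) ≤ qVal νp νn γ := by
    refine Finset.single_le_sum (f := fun i' => ∑ j : Fin m,
      ((∫ s in Set.Iic (0:ℝ), Real.exp (γ * s) ∂(νp i' j)) +
        ∫ s in Set.Iic (0:ℝ), Real.exp (γ * s) ∂(νn i' j))) ?_ (Finset.mem_univ i)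
    exact fun i' _ => Finset.sum_nonneg fun j _ =>
      add_nonneg (exp_setIntegral_nonneg _ _) (exp_setIntegral_nonneg _ _)
  exact add_le_add (mul_le_mul_of_nonneg_left hV hC1) (mul_le_mul_of_nonneg_left hq hC2)

lemma setInt_exp (μ : Measure ℝ) [IsFiniteMeasure μ] {f : ℝ → ℝ} (hf : Continuous f)
    {γ C2 : ℝ} (hγ : 0 ≤ γ) (hC2 : 0 ≤ C2)
    (h2 : ∀ s ≤ (0:ℝ), |f s| ≤ C2 * Real.exp (γ * s)) :
    |∫ s in Set.Iic (0:ℝ), f s ∂μ| ≤ C2 * ∫ s in Set.Iic (0:ℝ), Real.exp (γ * s) ∂μ := by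
  have hexp1 : ∀ s ≤ (0:ℝ), Real.exp (γ * s) ≤ 1 := by
    intro s hs
    calc Real.exp (γ * s) ≤ Real.exp 0 := Real.exp_le_exp.2 (mul_nonpos_iff.2 (Or.inl ⟨hγ, hs⟩))
    _ = 1 := Real.exp_zero
  have hbound : ∀ s ≤ (0:ℝ), |f s| ≤ C2 := by
    intro s hs
    have := hexp1 s hs
    nlinarith [h2 s hs]
  have hint : IntegrableOn f (Set.Iic 0) μ := integrableOn_ray μ hf hbound
  have hintexp : IntegrableOn (fun s => Real.exp (γ * s)) (Set.Iic 0) μ := exp_integrableOn μ hγ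
  have t1 : |∫ s in Set.Iic (0:ℝ), f s ∂μ| ≤ ∫ s in Set.Iic (0:ℝ), |f s| ∂μ := by
    simpa [Real.norm_eq_abs] using norm_integral_le_integral_norm (μ := μ.restrict (Set.Iic 0)) f
  have t2 : (∫ s in Set.Iic (0:ℝ), |f s| ∂μ) ≤ ∫ s in Set.Iic (0:ℝ), C2 * Real.exp (γ * s) ∂μ := by
    refine setIntegral_mono_on hint.abs (hintexp.const_mul _) measurableSet_Iic ?_
    exact fun s hs => h2 s hs
  have t3 : (∫ s in Set.Iic (0:ℝ), C2 * Real.exp (γ * s) ∂μ)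
      = C2 * ∫ s in Set.Iic (0:ℝ), Real.exp (γ * s) ∂μ := by rw [integral_const_mul]
  linarith
lemma Nint_bound_exp (νp νn : Fin m → Fin m → Measure ℝ)
    (hfp : ∀ i j, IsFiniteMeasure (νp i j)) (hfn : ∀ i j, IsFiniteMeasure (νn i j))
    {w : ℝ → Fin m → ℝ} (hw : Continuous w) {γ C2 : ℝ}
    (hγ : 0 ≤ γ) (hC2 : 0 ≤ C2)
    (h2 : ∀ s ≤ (0:ℝ), ‖w s‖ ≤ C2 * Real.exp (γ * s)) (i : Fin m) :
    |Nint νp νn w i| ≤ C2 * qVal νp νn γ := by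
  have hterm : ∀ j : Fin m,
      |(∫ s in Set.Iic (0:ℝ), w s j ∂(νp i j)) - ∫ s in Set.Iic (0:ℝ), w s j ∂(νn i j)| ≤
        C2 * ((∫ s in Set.Iic (0:ℝ), Real.exp (γ * s) ∂(νp i j)) +
          ∫ s in Set.Iic (0:ℝ), Real.exp (γ * s) ∂(νn i j)) := by
    intro j
    haveI := hfp i j; haveI := hfn i j
    have hwj : Continuous fun s => w s j := (continuous_apply j).comp hw
    have h2' : ∀ s ≤ (0:ℝ), |w s j| ≤ C2 * Real.exp (γ * s) := fun s hs => by
      calc |w s j| ≤ ‖w s‖ := by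
            simpa [Real.norm_eq_abs] using norm_le_pi_norm (w s) j
      _ ≤ C2 * Real.exp (γ * s) := h2 s hs
    have hp := setInt_exp (νp i j) hwj hγ hC2 h2'
    have hn := setInt_exp (νn i j) hwj hγ hC2 h2'
    have := abs_sub _ _ |>.trans (add_le_add hp hn)
    · linarith [this]
  have hsum : |Nint νp νn w i| ≤ ∑ j : Fin m,
      (C2 * ((∫ s in Set.Iic (0:ℝ), Real.exp (γ * s) ∂(νp i j)) +
          ∫ s in Set.Iic (0:ℝ), Real.exp (γ * s) ∂(νn i j))) := by
    refine (Finset.abs_sum_le_sum_abs _ _).trans ?_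
    exact Finset.sum_le_sum fun j _ => hterm j
  refine hsum.trans ?_
  rw [← Finset.mul_sum]
  have hq : (∑ j : Fin m, ((∫ s in Set.Iic (0:ℝ), Real.exp (γ * s) ∂(νp i j)) +
        ∫ s in Set.Iic (0:ℝ), Real.exp (γ * s) ∂(νn i j))) ≤ qVal νp νn γ := by
    refine Finset.single_le_sum (f := fun i' => ∑ j : Fin m,
      ((∫ s in Set.Iic (0:ℝ), Real.exp (γ * s) ∂(νp i' j)) +
        ∫ s in Set.Iic (0:ℝ), Real.exp (γ * s) ∂(νn i' j))) ?_ (Finset.mem_univ i)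
    exact fun i' _ => Finset.sum_nonneg fun j _ =>
      add_nonneg (exp_setIntegral_nonneg _ _) (exp_setIntegral_nonneg _ _)
  exact mul_le_mul_of_nonneg_left hq hC2

lemma Nint_sub (νp νn : Fin m → Fin m → Measure ℝ)
    (hfp : ∀ i j, IsFiniteMeasure (νp i j)) (hfn : ∀ i j, IsFiniteMeasure (νn i j))
    {w1 w2 : ℝ → Fin m → ℝ} (h1c : Continuous w1) (h2c : Continuous w2) {C1 C2 : ℝ}
    (hb1 : ∀ s ≤ (0:ℝ), ‖w1 s‖ ≤ C1) (hb2 : ∀ s ≤ (0:ℝ), ‖w2 s‖ ≤ C2) (i : Fin m) :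
    Nint νp νn (fun s => w1 s - w2 s) i = Nint νp νn w1 i - Nint νp νn w2 i := by
  have key : ∀ (μ : Fin m → Fin m → Measure ℝ), (∀ i j, IsFiniteMeasure (μ i j)) → ∀ j : Fin m,
      (∫ s in Set.Iic (0:ℝ), (w1 s - w2 s) j ∂(μ i j)) =
        (∫ s in Set.Iic (0:ℝ), w1 s j ∂(μ i j)) - ∫ s in Set.Iic (0:ℝ), w2 s j ∂(μ i j) := by
    intro μ hfμ j
    haveI := hfμ i j
    have i1 : IntegrableOn (fun s => w1 s j) (Set.Iic 0) (μ i j) := by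
      refine integrableOn_ray _ ((continuous_apply j).comp h1c) (C := C1) fun s hs => ?_
      calc |w1 s j| ≤ ‖w1 s‖ := by
            simpa [Real.norm_eq_abs] using norm_le_pi_norm (w1 s) j
      _ ≤ C1 := hb1 s hs
    have i2 : IntegrableOn (fun s => w2 s j) (Set.Iic 0) (μ i j) := by
      refine integrableOn_ray _ ((continuous_apply j).comp h2c) (C := C2) fun s hs => ?_
      calc |w2 s j| ≤ ‖w2 s‖ := by
            simpa [Real.norm_eq_abs] using norm_le_pi_norm (w2 s) j
      _ ≤ C2 := hb2 s hs
    simpa [Pi.sub_apply] using integral_sub i1 i2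
  unfold Nint
  rw [← Finset.sum_sub_distrib]
  refine Finset.sum_congr rfl fun j _ => ?_
  rw [key νp hfp j, key νn hfn j]
  ring

end Aux2

section Aux3

variable {m : ℕ}

lemma cont_param_integral (μ : Measure ℝ) [IsFiniteMeasure μ] {w : ℝ → ℝ} (hw : Continuous w)
    (hb : ∀ a : ℝ, ∃ C, ∀ s ≤ a, |w s| ≤ C) :
    Continuous fun τ => ∫ s in Set.Iic (0:ℝ), w (τ + s) ∂μ := by
  rw [continuous_iff_continuousAt]
  intro τ0
  obtain ⟨C, hC⟩ := hb (τ0 + 1)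
  refine tendsto_integral_filter_of_dominated_convergence (μ := μ.restrict (Set.Iic 0))
    (F := fun τ s => w (τ + s)) (f := fun s => w (τ0 + s)) (bound := fun _ => C) ?_ ?_ ?_ ?_
  · exact Eventually.of_forall fun τ =>
      (hw.comp (continuous_const.add continuous_id)).aestronglyMeasurable.restrict
  · have hev : ∀ᶠ τ in 𝓝 τ0, τ ≤ τ0 + 1 := eventually_le_nhds (by linarith)
    refine hev.mono fun τ hτ => ?_
    refine (ae_restrict_iff' measurableSet_Iic).2 (ae_of_all _ fun s hs => ?_)
    have hs0 : s ≤ 0 := Set.mem_Iic.1 hs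
    have : τ + s ≤ τ0 + 1 := by linarith
    simpa [Real.norm_eq_abs] using hC _ this
  · exact integrable_const C
  · refine ae_of_all _ fun s => ?_
    exact ((hw.comp (continuous_add_right s)).tendsto τ0)

lemma cont_Nint (νp νn : Fin m → Fin m → Measure ℝ)
    (hfp : ∀ i j, IsFiniteMeasure (νp i j)) (hfn : ∀ i j, IsFiniteMeasure (νn i j))
    {w : ℝ → Fin m → ℝ} (hw : Continuous w)
    (hb : ∀ a : ℝ, ∃ C, ∀ s ≤ a, ‖w s‖ ≤ C) (i : Fin m) :
    Continuous fun τ => Nint νp νn (shift m w τ) i := by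
  unfold Nint shift
  refine continuous_finset_sum _ fun j _ => Continuous.sub ?_ ?_
  · haveI := hfp i j
    refine cont_param_integral (νp i j) ((continuous_apply j).comp hw) fun a => ?_
    obtain ⟨C, hC⟩ := hb a
    exact ⟨C, fun s hs => by
      calc |w s j| ≤ ‖w s‖ := by
            simpa [Real.norm_eq_abs] using norm_le_pi_norm (w s) j
      _ ≤ C := hC s hs⟩
  · haveI := hfn i j
    refine cont_param_integral (νn i j) ((continuous_apply j).comp hw) fun a => ?_
    obtain ⟨C, hC⟩ := hb a
    exact ⟨C, fun s hs => by
      calc |w s j| ≤ ‖w s‖ := by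
            simpa [Real.norm_eq_abs] using norm_le_pi_norm (w s) j
      _ ≤ C := hC s hs⟩

lemma exp_tendsto_zero (μ : Measure ℝ) [IsFiniteMeasure μ] (h0 : μ {0} = 0) :
    Tendsto (fun n : ℕ => ∫ s in Set.Iic (0:ℝ), Real.exp ((n : ℝ) * s) ∂μ) atTop (𝓝 0) := by
  have key : Tendsto (fun n : ℕ => ∫ s in Set.Iic (0:ℝ), Real.exp ((n : ℝ) * s) ∂μ) atTop
      (𝓝 (∫ s in Set.Iic (0:ℝ), Set.indicator {0} (fun _ => (1:ℝ)) s ∂μ)) := by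
    refine tendsto_integral_of_dominated_convergence (bound := fun _ => (1:ℝ)) ?_ ?_ ?_ ?_
    · exact fun n => (Real.continuous_exp.comp
        (continuous_const.mul continuous_id)).aestronglyMeasurable.restrict
    · exact integrable_const 1
    · intro n
      refine (ae_restrict_iff' measurableSet_Iic).2 (ae_of_all _ fun s hs => ?_)
      rw [Real.norm_eq_abs, abs_of_pos (Real.exp_pos _)]
      calc Real.exp ((n:ℝ) * s) ≤ Real.exp 0 :=
        Real.exp_le_exp.2 (mul_nonpos_iff.2 (Or.inl ⟨Nat.cast_nonneg n, Set.mem_Iic.1 hs⟩))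
      _ = 1 := Real.exp_zero
    · refine (ae_restrict_iff' measurableSet_Iic).2 (ae_of_all _ fun s hs => ?_)
      rcases eq_or_lt_of_le (Set.mem_Iic.1 hs) with he | hlt
      · subst he
        simp only [Set.indicator_of_mem (Set.mem_singleton (0:ℝ)), mul_zero, Real.exp_zero]
        exact tendsto_const_nhds
      · have : Set.indicator ({0} : Set ℝ) (fun _ => (1:ℝ)) s = 0 :=
          Set.indicator_of_notMem (by simpa using hlt.ne) _
        rw [this]
        have hrw : (fun n : ℕ => Real.exp ((n : ℝ) * s)) = fun n : ℕ => (Real.exp s) ^ n := by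
          funext n; rw [← Real.exp_nat_mul]
        rw [hrw]
        exact tendsto_pow_atTop_nhds_zero_of_lt_one (Real.exp_pos s).le (Real.exp_lt_one_iff.2 hlt)
  have hz : (∫ s in Set.Iic (0:ℝ), Set.indicator {0} (fun _ => (1:ℝ)) s ∂μ) = 0 := by
    rw [integral_indicator (measurableSet_singleton 0), setIntegral_const]
    have hres : (μ.restrict (Set.Iic 0)) {0} = 0 := by
      rw [Measure.restrict_apply (measurableSet_singleton 0)]
      refine le_antisymm ?_ zero_le
      calc μ ({0} ∩ Set.Iic 0) ≤ μ {0} := measure_mono Set.inter_subset_left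
      _ = 0 := h0
    rw [Measure.real, hres]
    simp
  rw [hz] at key
  exact key

end Aux3

section Aux4

variable {m : ℕ}

lemma exists_gamma (νp νn : Fin m → Fin m → Measure ℝ)
    (hfp : ∀ i j, IsFiniteMeasure (νp i j)) (hfn : ∀ i j, IsFiniteMeasure (νn i j))
    (h0p : ∀ i j, νp i j {0} = 0) (h0n : ∀ i j, νn i j {0} = 0) :
    ∃ γ : ℝ, 0 ≤ γ ∧ qVal νp νn γ ≤ 1/4 := by
  have key : Tendsto (fun n : ℕ => qVal νp νn (n : ℝ)) atTop (𝓝 0) := by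
    have h0 : (0:ℝ) = ∑ i : Fin m, ∑ j : Fin m, ((0:ℝ) + 0) := by simp
    rw [h0]
    refine tendsto_finset_sum _ fun i _ => tendsto_finset_sum _ fun j _ => ?_
    haveI := hfp i j; haveI := hfn i j
    exact Tendsto.add (exp_tendsto_zero (νp i j) (h0p i j)) (exp_tendsto_zero (νn i j) (h0n i j))
  have hev : ∀ᶠ n : ℕ in atTop, qVal νp νn (n : ℝ) < 1/4 := by
    refine key.eventually (tendsto_id.eventually_lt_const ?_)
    norm_num
  obtain ⟨n, hn⟩ := hev.exists
  exact ⟨(n : ℝ), Nat.cast_nonneg n, hn.le⟩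

lemma exp_lip {γ : ℝ} (hγ : 0 ≤ γ) {s s' : ℝ} (hs : s ≤ 0) (hs' : s' ≤ 0) :
    |Real.exp (γ * s) - Real.exp (γ * s')| ≤ γ * |s - s'| := by
  have key : ∀ u v : ℝ, u ≤ 0 → v ≤ 0 → v ≤ u →
      Real.exp (γ * u) - Real.exp (γ * v) ≤ γ * (u - v) := by
    intro u v hu hv hvu
    have h1 : Real.exp (γ * u) ≤ 1 := by
      calc Real.exp (γ * u) ≤ Real.exp 0 := Real.exp_le_exp.2 (mul_nonpos_iff.2 (Or.inl ⟨hγ, hu⟩))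
      _ = 1 := Real.exp_zero
    have h2 : Real.exp (γ * v) = Real.exp (γ * u) * Real.exp (γ * (v - u)) := by
      rw [← Real.exp_add]; ring_nf
    have h3 : γ * (v - u) + 1 ≤ Real.exp (γ * (v - u)) := Real.add_one_le_exp _
    have hnn : 0 < Real.exp (γ * u) := Real.exp_pos _
    have hA : Real.exp (γ * u) - Real.exp (γ * v)
        = Real.exp (γ * u) * (1 - Real.exp (γ * (v - u))) := by rw [h2]; ring
    have hB : 1 - Real.exp (γ * (v - u)) ≤ γ * (u - v) := by linarith
    have hpos : (0:ℝ) ≤ γ * (u - v) := mul_nonneg hγ (by linarith)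
    calc Real.exp (γ * u) - Real.exp (γ * v)
        = Real.exp (γ * u) * (1 - Real.exp (γ * (v - u))) := hA
    _ ≤ Real.exp (γ * u) * (γ * (u - v)) := mul_le_mul_of_nonneg_left hB hnn.le
    _ ≤ 1 * (γ * (u - v)) := mul_le_mul_of_nonneg_right h1 hpos
    _ = γ * (u - v) := one_mul _
  rcases le_total s' s with hle | hle
  · rw [abs_of_nonneg (by nlinarith : (0:ℝ) ≤ s - s')] 
    have h4 : Real.exp (γ * s') ≤ Real.exp (γ * s) := Real.exp_le_exp.2 (by nlinarith)
    rw [abs_of_nonneg (by linarith : (0:ℝ) ≤ Real.exp (γ * s) - Real.exp (γ * s'))]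
    exact key s s' hs hs' hle
  · rw [abs_of_nonpos (by nlinarith : s - s' ≤ 0)]
    have h4 : Real.exp (γ * s) ≤ Real.exp (γ * s') := Real.exp_le_exp.2 (by nlinarith)
    rw [abs_of_nonpos (by linarith : Real.exp (γ * s) - Real.exp (γ * s') ≤ 0)]
    have := key s' s hs' hs hle
    linarith

/-- uniform continuity of a continuous function vanishing on `(-∞,0]`, on rays `(-∞,a]` -/
lemma ray_unifCont {x : ℝ → Fin m → ℝ} (hx : Continuous x) (hx0 : ∀ s ≤ (0:ℝ), x s = 0)
    (a : ℝ) : ∀ ε > (0:ℝ), ∃ δ > (0:ℝ), ∀ s ≤ a, ∀ s' ≤ a, |s - s'| < δ →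
      ‖x s - x s'‖ < ε := by
  intro ε hε
  have hK : IsCompact (Set.Icc (-1 : ℝ) (max a 0)) := isCompact_Icc
  have hUC := hK.uniformContinuousOn_of_continuous (hx.continuousOn)
  rw [Metric.uniformContinuousOn_iff] at hUC
  obtain ⟨δ0, hδ0, hδ⟩ := hUC ε hε
  refine ⟨min δ0 1, by positivity, fun s hs s' hs' hd => ?_⟩
  rcases le_or_gt s 0 with h1 | h1
  · rcases le_or_gt s' 0 with h2 | h2
    · rw [hx0 s h1, hx0 s' h2]; simpa using hε
    · -- s ≤ 0 < s' : both in [-1, max a 0]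
      have hs1 : s ∈ Set.Icc (-1 : ℝ) (max a 0) := by
        constructor
        · have : |s - s'| < 1 := lt_of_lt_of_le hd (min_le_right _ _)
          rw [abs_sub_lt_iff] at this
          linarith
        · exact le_trans h1 (le_max_right _ _)
      have hs2 : s' ∈ Set.Icc (-1 : ℝ) (max a 0) := by
        constructor
        · linarith
        · exact le_trans hs' (le_max_left _ _)
      have := hδ s hs1 s' hs2 (by rw [Real.dist_eq]; exact lt_of_lt_of_le hd (min_le_left _ _))
      rwa [dist_eq_norm] at this
  · have hs1 : s ∈ Set.Icc (-1 : ℝ) (max a 0) :=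
      ⟨by linarith, le_trans hs (le_max_left _ _)⟩
    rcases le_or_gt s' 0 with h2 | h2
    · have hs2 : s' ∈ Set.Icc (-1 : ℝ) (max a 0) := by
        constructor
        · have : |s - s'| < 1 := lt_of_lt_of_le hd (min_le_right _ _)
          rw [abs_sub_lt_iff] at this
          linarith
        · exact le_trans h2 (le_max_right _ _)
      have := hδ s hs1 s' hs2 (by rw [Real.dist_eq]; exact lt_of_lt_of_le hd (min_le_left _ _))
      rwa [dist_eq_norm] at this
    · have hs2 : s' ∈ Set.Icc (-1 : ℝ) (max a 0) :=
        ⟨by linarith, le_trans hs' (le_max_left _ _)⟩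
      have := hδ s hs1 s' hs2 (by rw [Real.dist_eq]; exact lt_of_lt_of_le hd (min_le_left _ _))
      rwa [dist_eq_norm] at this

lemma le_supOn {h : ℝ → Fin m → ℝ} (hh : ContinuousOn h (Set.Ici 0)) {t u : ℝ}
    (h0u : 0 ≤ u) (hut : u ≤ t) : ‖h u‖ ≤ supOn m h t := by
  have hB : BddAbove (Set.range fun u : Set.Icc (0:ℝ) t => ‖h (u : ℝ)‖) := by
    obtain ⟨C, hC⟩ := (isCompact_Icc (a := (0:ℝ)) (b := t)).exists_bound_of_continuousOn
      (hh.mono fun z hz => hz.1)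
    refine ⟨C, ?_⟩
    rintro _ ⟨v, rfl⟩
    exact hC v v.2
  exact le_ciSup hB ⟨u, h0u, hut⟩

lemma supOn_mono {h : ℝ → Fin m → ℝ} (hh : ContinuousOn h (Set.Ici 0)) {t t' : ℝ}
    (ht : 0 ≤ t) (htt' : t ≤ t') : supOn m h t ≤ supOn m h t' := by
  haveI : Nonempty (Set.Icc (0:ℝ) t) := Set.Nonempty.to_subtype (Set.nonempty_Icc.2 ht)
  exact ciSup_le fun u => le_supOn hh u.2.1 (u.2.2.trans htt')

lemma supOn_nonneg {h : ℝ → Fin m → ℝ} (hh : ContinuousOn h (Set.Ici 0)) {t : ℝ} (ht : 0 ≤ t)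
    (hzero : h 0 = 0) : 0 ≤ supOn m h t := by
  have := le_supOn (m := m) hh (le_refl (0:ℝ)) ht
  rw [hzero] at this
  simpa using this

lemma supOn_zero {h : ℝ → Fin m → ℝ} (hzero : h 0 = 0) : supOn m h 0 ≤ 0 := by
  haveI : Nonempty (Set.Icc (0:ℝ) 0) := Set.Nonempty.to_subtype (Set.nonempty_Icc.2 le_rfl)
  refine ciSup_le fun u => ?_
  have hu : (u : ℝ) = 0 := le_antisymm u.2.2 u.2.1
  rw [hu, hzero]
  simp

end Aux4

section Aux5

variable {m : ℕ}

lemma Nint_congr (νp νn : Fin m → Fin m → Measure ℝ) {w1 w2 : ℝ → Fin m → ℝ}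
    (hw : ∀ s ≤ (0:ℝ), w1 s = w2 s) (i : Fin m) :
    Nint νp νn w1 i = Nint νp νn w2 i := by
  unfold Nint
  refine Finset.sum_congr rfl fun j _ => ?_
  have e1 : (∫ s in Set.Iic (0:ℝ), w1 s j ∂(νp i j)) = ∫ s in Set.Iic (0:ℝ), w2 s j ∂(νp i j) :=
    setIntegral_congr_fun measurableSet_Iic fun s hs => by rw [hw s (Set.mem_Iic.1 hs)]
  have e2 : (∫ s in Set.Iic (0:ℝ), w1 s j ∂(νn i j)) = ∫ s in Set.Iic (0:ℝ), w2 s j ∂(νn i j) :=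
    setIntegral_congr_fun measurableSet_Iic fun s hs => by rw [hw s (Set.mem_Iic.1 hs)]
  rw [e1, e2]

lemma exists_homog (νp νn : Fin m → Fin m → Measure ℝ)
    (hfp : ∀ i j, IsFiniteMeasure (νp i j)) (hfn : ∀ i j, IsFiniteMeasure (νn i j))
    {γ : ℝ} (hγ : 0 ≤ γ) (hq : qVal νp νn γ ≤ 1/4)
    (φ : ℝ → Fin m → ℝ) (hφc : Continuous φ) {Cφ : ℝ}
    (hφb : ∀ s ≤ (0:ℝ), ‖φ s‖ ≤ Cφ)
    (hDφ : ∀ i, φ 0 i = Nint νp νn φ i) :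
    ∃ y : ℝ → Fin m → ℝ, Continuous y ∧ (∀ s ≤ (0:ℝ), y s = φ s) ∧
      (∀ a : ℝ, ∃ C, 0 ≤ C ∧ ∀ s ≤ a, ‖y s‖ ≤ C) ∧
      (∀ τ, 0 ≤ τ → ∀ i, y τ i = Nint νp νn (shift m y τ) i) := by
  have hCφ : 0 ≤ Cφ := (norm_nonneg (φ 0)).trans (hφb 0 le_rfl)
  have hqn : 0 ≤ qVal νp νn γ := qVal_nonneg νp νn γ
  have hVn : 0 ≤ VVal νp νn := VVal_nonneg νp νn
  -- the map W
  set Wf : (ℝ →ᵇ (Fin m → ℝ)) → ℝ → Fin m → ℝ :=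
    fun g t => if t ≤ 0 then φ t else Real.exp (γ * t) • (g t - g 0 + φ 0) with hWfdef
  have hWpast : ∀ g, ∀ s ≤ (0:ℝ), Wf g s = φ s := fun g s hs => if_pos hs
  have hWc : ∀ g, Continuous (Wf g) := by
    intro g
    refine Continuous.if_le hφc ?_ continuous_id continuous_const ?_
    · exact (Real.continuous_exp.comp (continuous_const.mul continuous_id)).smul
        ((g.continuous.sub continuous_const).add continuous_const)
    · intro t ht
      subst ht
      simp
  have hWray : ∀ g : ℝ →ᵇ (Fin m → ℝ), ∀ a : ℝ, ∀ s ≤ a,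
      ‖Wf g s‖ ≤ max Cφ (Real.exp (γ * max a 0) * (2 * ‖g‖ + Cφ)) := by
    intro g a s hs
    by_cases hs0 : s ≤ 0
    · rw [hWpast g s hs0]
      exact (hφb s hs0).trans (le_max_left _ _)
    · push_neg at hs0
      refine le_trans ?_ (le_max_right _ _)
      have : Wf g s = Real.exp (γ * s) • (g s - g 0 + φ 0) := if_neg (not_le.2 hs0)
      rw [this, norm_smul, Real.norm_eq_abs, abs_of_pos (Real.exp_pos _)]
      have hb : ‖g s - g 0 + φ 0‖ ≤ 2 * ‖g‖ + Cφ := by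
        calc ‖g s - g 0 + φ 0‖ ≤ ‖g s - g 0‖ + ‖φ 0‖ := norm_add_le _ _
        _ ≤ (‖g s‖ + ‖g 0‖) + ‖φ 0‖ := by gcongr; exact norm_sub_le _ _
        _ ≤ (‖g‖ + ‖g‖) + Cφ := by
            gcongr
            · exact g.norm_coe_le_norm s
            · exact g.norm_coe_le_norm 0
            · exact hφb 0 le_rfl
        _ = 2 * ‖g‖ + Cφ := by ring
      have he : Real.exp (γ * s) ≤ Real.exp (γ * max a 0) :=
        Real.exp_le_exp.2 (mul_le_mul_of_nonneg_left (hs.trans (le_max_left _ _)) hγ)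
      exact mul_le_mul he hb (norm_nonneg _) (Real.exp_pos _).le
  -- the map Ψ
  set Ψf : (ℝ →ᵇ (Fin m → ℝ)) → ℝ → Fin m → ℝ :=
    fun g τ' => fun i => Real.exp (-(γ * max τ' 0)) *
      Nint νp νn (shift m (Wf g) (max τ' 0)) i with hΨfdef
  have hΨcont : ∀ g, Continuous (Ψf g) := by
    intro g
    refine continuous_pi fun i => Continuous.mul ?_ ?_
    · exact Real.continuous_exp.comp ((continuous_const.mul
        (continuous_id.max continuous_const)).neg)
    · refine (cont_Nint νp νn hfp hfn (hWc g) ?_ i).comp (continuous_id.max continuous_const)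
      intro a
      exact ⟨max Cφ (Real.exp (γ * max a 0) * (2 * ‖g‖ + Cφ)), hWray g a⟩
  have hNbound : ∀ g : ℝ →ᵇ (Fin m → ℝ), ∀ τ ≥ (0:ℝ), ∀ i,
      |Nint νp νn (shift m (Wf g) τ) i| ≤
        Cφ * VVal νp νn + (Real.exp (γ * τ) * (2 * ‖g‖ + Cφ)) * qVal νp νn γ := by
    intro g τ hτ i
    refine Nint_bound_split νp νn hfp hfn ?_ hγ (neg_nonpos.2 hτ) hCφ ?_ ?_ ?_ i
    · exact (hWc g).comp (continuous_const.add continuous_id)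
    · positivity
    · intro s hs
      have : τ + s ≤ 0 := by linarith
      unfold shift
      rw [hWpast g _ this]
      exact hφb _ this
    · intro s hs
      have hpos : 0 < τ + s := by have := hs.1; linarith
      unfold shift
      have : Wf g (τ + s) = Real.exp (γ * (τ + s)) • (g (τ+s) - g 0 + φ 0) :=
        if_neg (not_le.2 hpos)
      rw [this, norm_smul, Real.norm_eq_abs, abs_of_pos (Real.exp_pos _)]
      have hb : ‖g (τ+s) - g 0 + φ 0‖ ≤ 2 * ‖g‖ + Cφ := by
        calc ‖g (τ+s) - g 0 + φ 0‖ ≤ ‖g (τ+s) - g 0‖ + ‖φ 0‖ := norm_add_le _ _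
        _ ≤ (‖g (τ+s)‖ + ‖g 0‖) + ‖φ 0‖ := by gcongr; exact norm_sub_le _ _
        _ ≤ (‖g‖ + ‖g‖) + Cφ := by
            gcongr
            · exact g.norm_coe_le_norm _
            · exact g.norm_coe_le_norm 0
            · exact hφb 0 le_rfl
        _ = 2 * ‖g‖ + Cφ := by ring
      have hsplit : Real.exp (γ * (τ + s)) = Real.exp (γ * τ) * Real.exp (γ * s) := by
        rw [← Real.exp_add]; ring_nf
      rw [hsplit]
      calc Real.exp (γ * τ) * Real.exp (γ * s) * ‖g (τ+s) - g 0 + φ 0‖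
          ≤ Real.exp (γ * τ) * Real.exp (γ * s) * (2 * ‖g‖ + Cφ) := by
            refine mul_le_mul_of_nonneg_left hb (by positivity)
      _ = Real.exp (γ * τ) * (2 * ‖g‖ + Cφ) * Real.exp (γ * s) := by ring
  have hΨbound : ∀ g : ℝ →ᵇ (Fin m → ℝ), ∀ τ' : ℝ,
      ‖Ψf g τ'‖ ≤ Cφ * VVal νp νn + (2 * ‖g‖ + Cφ) * qVal νp νn γ := by
    intro g τ'
    set τ := max τ' 0 with hτdef
    have hτ : 0 ≤ τ := le_max_right _ _
    refine (pi_norm_le_iff_of_nonneg (by positivity)).2 fun i => ?_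
    rw [Real.norm_eq_abs, abs_mul, abs_of_pos (Real.exp_pos _)]
    have hN := hNbound g τ hτ i
    have hcancel : Real.exp (-(γ * τ)) * Real.exp (γ * τ) = 1 := by
      rw [← Real.exp_add]; simp
    have he1 : Real.exp (-(γ * τ)) ≤ 1 := by
      calc Real.exp (-(γ * τ)) ≤ Real.exp 0 :=
        Real.exp_le_exp.2 (neg_nonpos.2 (mul_nonneg hγ hτ))
      _ = 1 := Real.exp_zero
    have hepos : 0 < Real.exp (-(γ * τ)) := Real.exp_pos _
    calc Real.exp (-(γ * τ)) * |Nint νp νn (shift m (Wf g) τ) i|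
        ≤ Real.exp (-(γ * τ)) * (Cφ * VVal νp νn +
            (Real.exp (γ * τ) * (2 * ‖g‖ + Cφ)) * qVal νp νn γ) := by
          exact mul_le_mul_of_nonneg_left hN hepos.le
    _ = Real.exp (-(γ * τ)) * (Cφ * VVal νp νn) +
        (Real.exp (-(γ * τ)) * Real.exp (γ * τ)) * ((2 * ‖g‖ + Cφ) * qVal νp νn γ) := by ring
    _ ≤ 1 * (Cφ * VVal νp νn) + 1 * ((2 * ‖g‖ + Cφ) * qVal νp νn γ) := by
        rw [hcancel]
        gcongr
    _ = Cφ * VVal νp νn + (2 * ‖g‖ + Cφ) * qVal νp νn γ := by ring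
  set Φ : (ℝ →ᵇ (Fin m → ℝ)) → (ℝ →ᵇ (Fin m → ℝ)) :=
    fun g => BoundedContinuousFunction.ofNormedAddCommGroup (Ψf g) (hΨcont g) _ (hΨbound g)
    with hΦdef
  have hΦcoe : ∀ g, ⇑(Φ g) = Ψf g := fun g => rfl
  -- contraction
  have hLip : ∀ g g', dist (Φ g) (Φ g') ≤ (1/2) * dist g g' := by
    intro g g'
    have hd : 0 ≤ dist g g' := dist_nonneg
    refine (BoundedContinuousFunction.dist_le (by positivity)).2 fun τ' => ?_
    rw [hΦcoe, hΦcoe]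
    set τ := max τ' 0 with hτdef
    have hτ : 0 ≤ τ := le_max_right _ _
    refine (dist_pi_le_iff (by positivity)).2 fun i => ?_
    rw [Real.dist_eq]
    have hdiff : Ψf g τ' i - Ψf g' τ' i = Real.exp (-(γ * τ)) *
        (Nint νp νn (shift m (Wf g) τ) i - Nint νp νn (shift m (Wf g') τ) i) := by
      simp only [hΨfdef]
      ring
    have hb1 : ∀ s ≤ (0:ℝ), ‖shift m (Wf g) τ s‖ ≤
        max Cφ (Real.exp (γ * max τ 0) * (2 * ‖g‖ + Cφ)) := fun s hs =>
      hWray g τ (τ + s) (by linarith)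
    have hb2 : ∀ s ≤ (0:ℝ), ‖shift m (Wf g') τ s‖ ≤
        max Cφ (Real.exp (γ * max τ 0) * (2 * ‖g'‖ + Cφ)) := fun s hs =>
      hWray g' τ (τ + s) (by linarith)
    have hc1 : Continuous (shift m (Wf g) τ) :=
      (hWc g).comp (continuous_const.add continuous_id)
    have hc2 : Continuous (shift m (Wf g') τ) :=
      (hWc g').comp (continuous_const.add continuous_id)
    have hsub : Nint νp νn (fun s => shift m (Wf g) τ s - shift m (Wf g') τ s) i
        = Nint νp νn (shift m (Wf g) τ) i - Nint νp νn (shift m (Wf g') τ) i :=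
      Nint_sub νp νn hfp hfn hc1 hc2 hb1 hb2 i
    have hNd : |Nint νp νn (fun s => shift m (Wf g) τ s - shift m (Wf g') τ s) i| ≤
        0 * VVal νp νn + (Real.exp (γ * τ) * (2 * dist g g')) * qVal νp νn γ := by
      refine Nint_bound_split νp νn hfp hfn ?_ hγ (neg_nonpos.2 hτ) le_rfl (by positivity) ?_ ?_ i
      · exact ((hWc g).comp (continuous_const.add continuous_id)).sub
          ((hWc g').comp (continuous_const.add continuous_id))
      · intro s hs
        have hle : τ + s ≤ 0 := by linarith
        unfold shift
        rw [hWpast g _ hle, hWpast g' _ hle]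
        simp
      · intro s hs
        have hpos : 0 < τ + s := by have := hs.1; linarith
        unfold shift
        have e1 : Wf g (τ + s) = Real.exp (γ * (τ + s)) • (g (τ+s) - g 0 + φ 0) :=
          if_neg (not_le.2 hpos)
        have e2 : Wf g' (τ + s) = Real.exp (γ * (τ + s)) • (g' (τ+s) - g' 0 + φ 0) :=
          if_neg (not_le.2 hpos)
        rw [e1, e2, ← smul_sub, norm_smul, Real.norm_eq_abs, abs_of_pos (Real.exp_pos _)]
        have hb : ‖(g (τ+s) - g 0 + φ 0) - (g' (τ+s) - g' 0 + φ 0)‖ ≤ 2 * dist g g' := by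
          have hrw : (g (τ+s) - g 0 + φ 0) - (g' (τ+s) - g' 0 + φ 0)
              = (g (τ+s) - g' (τ+s)) - (g 0 - g' 0) := by abel
          rw [hrw]
          calc ‖(g (τ+s) - g' (τ+s)) - (g 0 - g' 0)‖
              ≤ ‖g (τ+s) - g' (τ+s)‖ + ‖g 0 - g' 0‖ := norm_sub_le _ _
          _ ≤ dist g g' + dist g g' := by
              refine add_le_add ?_ ?_
              · rw [← dist_eq_norm]; exact BoundedContinuousFunction.dist_coe_le_dist _
              · rw [← dist_eq_norm]; exact BoundedContinuousFunction.dist_coe_le_dist _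
          _ = 2 * dist g g' := by ring
        have hsplit : Real.exp (γ * (τ + s)) = Real.exp (γ * τ) * Real.exp (γ * s) := by
          rw [← Real.exp_add]; ring_nf
        rw [hsplit]
        calc Real.exp (γ * τ) * Real.exp (γ * s) *
            ‖(g (τ+s) - g 0 + φ 0) - (g' (τ+s) - g' 0 + φ 0)‖
            ≤ Real.exp (γ * τ) * Real.exp (γ * s) * (2 * dist g g') := by
              exact mul_le_mul_of_nonneg_left hb (by positivity)
        _ = Real.exp (γ * τ) * (2 * dist g g') * Real.exp (γ * s) := by ring
    rw [hdiff, abs_mul, abs_of_pos (Real.exp_pos _), ← hsub]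
    have hcancel : Real.exp (-(γ * τ)) * Real.exp (γ * τ) = 1 := by
      rw [← Real.exp_add]; simp
    calc Real.exp (-(γ * τ)) *
        |Nint νp νn (fun s => shift m (Wf g) τ s - shift m (Wf g') τ s) i|
        ≤ Real.exp (-(γ * τ)) *
          (0 * VVal νp νn + (Real.exp (γ * τ) * (2 * dist g g')) * qVal νp νn γ) :=
          mul_le_mul_of_nonneg_left hNd (Real.exp_pos _).le
    _ = (Real.exp (-(γ * τ)) * Real.exp (γ * τ)) * (2 * dist g g' * qVal νp νn γ) := by ring
    _ = 2 * dist g g' * qVal νp νn γ := by rw [hcancel]; ring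
    _ ≤ 2 * dist g g' * (1/4) := by
        refine mul_le_mul_of_nonneg_left hq (by positivity)
    _ = (1/2) * dist g g' := by ring
  have hCW : ContractingWith (1/2 : NNReal) Φ := by
    constructor
    · rw [← NNReal.coe_lt_coe]
      norm_num
    · refine LipschitzWith.of_dist_le_mul fun g g' => ?_
      refine le_trans (hLip g g') (le_of_eq ?_)
      norm_num
  haveI : Nonempty (ℝ →ᵇ (Fin m → ℝ)) := ⟨0⟩
  set g0 : ℝ →ᵇ (Fin m → ℝ) := ContractingWith.fixedPoint Φ hCW with hg0def
  have hfix : Φ g0 = g0 := hCW.fixedPoint_isFixedPt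
  have hfix' : ∀ τ', Ψf g0 τ' = g0 τ' := by
    intro τ'
    conv_rhs => rw [← hfix]
    rfl
  -- value at 0
  have hg00 : g0 0 = φ 0 := by
    rw [← hfix' 0]
    funext i
    have hmax : max (0:ℝ) 0 = 0 := max_self 0
    simp only [hΨfdef, hmax, mul_zero, neg_zero, Real.exp_zero, one_mul]
    have hcongr : Nint νp νn (shift m (Wf g0) 0) i = Nint νp νn φ i := by
      refine Nint_congr νp νn (fun s hs => ?_) i
      unfold shift
      rw [zero_add, hWpast g0 s hs]
    rw [hcongr, ← hDφ i]
  refine ⟨Wf g0, hWc g0, hWpast g0, ?_, ?_⟩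
  · intro a
    refine ⟨max Cφ (Real.exp (γ * max a 0) * (2 * ‖g0‖ + Cφ)), ?_, hWray g0 a⟩
    exact le_trans hCφ (le_max_left _ _)
  · intro τ hτ i
    rcases eq_or_lt_of_le hτ with he | hpos
    · subst he
      have h1 : Wf g0 0 = φ 0 := hWpast g0 0 le_rfl
      have h2 : Nint νp νn (shift m (Wf g0) 0) i = Nint νp νn φ i := by
        refine Nint_congr νp νn (fun s hs => ?_) i
        unfold shift
        rw [zero_add, hWpast g0 s hs]
      rw [h1, h2, ← hDφ i]
    · have h1 : Wf g0 τ = Real.exp (γ * τ) • (g0 τ - g0 0 + φ 0) := if_neg (not_le.2 hpos)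
      have h2 : g0 τ - g0 0 + φ 0 = g0 τ := by rw [hg00]; abel
      have h3 : g0 τ = Ψf g0 τ := (hfix' τ).symm
      have hmax : max τ (0:ℝ) = τ := max_eq_left hτ
      have hcancel : Real.exp (γ * τ) * Real.exp (-(γ * τ)) = 1 := by
        rw [← Real.exp_add]; simp
      rw [h1, h2, h3]
      simp only [hΨfdef, hmax, Pi.smul_apply, smul_eq_mul]
      rw [← mul_assoc, hcancel, one_mul]

set_option maxHeartbeats 1000000

/-- If `D` is stable, there is `d > 0` such that for each
continuous `h : [0,∞) → ℝ^m` with `h(0) = 0`, the solution of `D x_t = h(t)`,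
`t ≥ 0`, with `x_0 = 0` satisfies `‖x(t)‖ ≤ d sup_{0 ≤ u ≤ t} ‖h(u)‖` for
each `t ≥ 0`. -/
theorem statement3 (m : ℕ) (νp νn : Fin m → Fin m → Measure ℝ)
    (hν : NuCond m νp νn) (hst : IsStableOp m (Dop m νp νn)) :
    ∃ d : ℝ, 0 < d ∧
      ∀ h : ℝ → Fin m → ℝ, ContinuousOn h (Set.Ici 0) → h 0 = 0 →
      ∀ x : ℝ → Fin m → ℝ, Continuous x → (∀ s : ℝ, s ≤ 0 → x s = 0) →
        (∀ t : ℝ, 0 ≤ t → Dop m νp νn (shift m x t) = h t) →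
        ∀ t : ℝ, 0 ≤ t → ‖x t‖ ≤ d * supOn m h t := by
  obtain ⟨c, hc_cont, hc_nonneg, hc_tendsto, hc_stab⟩ := hst
  obtain ⟨hp_fin, hn_fin, hp0, hn0⟩ := hν
  have hfp : ∀ i j, IsFiniteMeasure (νp i j) := fun i j => ⟨(hp_fin i j).lt_top⟩
  have hfn : ∀ i j, IsFiniteMeasure (νn i j) := fun i j => ⟨(hn_fin i j).lt_top⟩
  obtain ⟨γ, hγ, hq⟩ := exists_gamma νp νn hfp hfn hp0 hn0
  have hVn : 0 ≤ VVal νp νn := VVal_nonneg νp νn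
  have hqn : 0 ≤ qVal νp νn γ := qVal_nonneg νp νn γ
  obtain ⟨T, hT1, hcT⟩ : ∃ T : ℝ, 1 ≤ T ∧ c T ≤ 1/2 := by
    have h1 : ∀ᶠ t in atTop, c t < 1/2 :=
      hc_tendsto.eventually_lt_const (by norm_num : (0:ℝ) < 1/2)
    obtain ⟨T, hT⟩ := (h1.and (eventually_ge_atTop (1:ℝ))).exists
    exact ⟨T, hT.2, hT.1.le⟩
  have hT0 : 0 < T := lt_of_lt_of_le one_pos hT1
  set A : ℝ := (2 + 4 * VVal νp νn) * Real.exp (γ * T) with hAdef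
  have hApos : 0 < A := by positivity
  refine ⟨2 * A + 2, by positivity, ?_⟩
  intro h hh hh0 x hx hx0 hxD
  have hH00 : supOn m h 0 = 0 :=
    le_antisymm (supOn_zero hh0) (supOn_nonneg hh le_rfl hh0)
  have hxray : ∀ a : ℝ, ∃ C, 0 ≤ C ∧ ∀ u ≤ a, ‖x u‖ ≤ C := by
    intro a
    obtain ⟨C, hC⟩ := (isCompact_Icc (a := (0:ℝ)) (b := max a 0)).exists_bound_of_continuousOn
      hx.continuousOn
    refine ⟨max C 0, le_max_right _ _, fun u hu => ?_⟩
    rcases le_or_gt u 0 with h1 | h1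
    · rw [hx0 u h1]; simp
    · exact (hC u ⟨h1.le, hu.trans (le_max_left _ _)⟩).trans (le_max_left _ _)
  -- ===== KEY LEMMA =====
  have key : ∀ t0 t : ℝ, 0 ≤ t0 → t0 ≤ t → t - t0 ≤ T → ∀ d0 : ℝ,
      (∀ u : ℝ, 0 ≤ u → u ≤ t0 → ‖x u‖ ≤ d0) →
      ‖x t‖ ≤ c (t - t0) * (d0 + 2 * supOn m h t0) + A * supOn m h t := by
    intro t0 t ht0 htt hT' d0 hd0
    have h0t : (0:ℝ) ≤ t := ht0.trans htt
    have hH0 : 0 ≤ supOn m h t0 := supOn_nonneg hh ht0 hh0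
    have hHt : 0 ≤ supOn m h t := supOn_nonneg hh h0t hh0
    have hmono : supOn m h t0 ≤ supOn m h t := supOn_mono hh ht0 htt
    have hd0nn : 0 ≤ d0 := by
      have := hd0 0 le_rfl ht0
      rw [hx0 0 le_rfl] at this
      simpa using this
    have hxd0 : ∀ u ≤ t0, ‖x u‖ ≤ d0 := by
      intro u hu
      rcases le_or_gt u 0 with h1 | h1
      · rw [hx0 u h1]; simpa using hd0nn
      · exact hd0 u h1.le hu
    -- == construct v ==
    set Gm : (Fin m → ℝ) → (Fin m → ℝ) :=
      fun w => fun i => h t0 i + Nint νp νn (fun s => Real.exp (γ * s) • w) i with hGmdef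
    have hGmsub : ∀ w w' : Fin m → ℝ, ∀ i,
        Gm w i - Gm w' i = Nint νp νn (fun s => Real.exp (γ * s) • (w - w')) i := by
      intro w w' i
      have hcw : Continuous fun s : ℝ => Real.exp (γ * s) • w :=
        (Real.continuous_exp.comp (continuous_const.mul continuous_id)).smul continuous_const
      have hcw' : Continuous fun s : ℝ => Real.exp (γ * s) • w' :=
        (Real.continuous_exp.comp (continuous_const.mul continuous_id)).smul continuous_const
      have hbw : ∀ s ≤ (0:ℝ), ‖Real.exp (γ * s) • w‖ ≤ ‖w‖ := by
        intro s hs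
        rw [norm_smul, Real.norm_eq_abs, abs_of_pos (Real.exp_pos _)]
        have : Real.exp (γ * s) ≤ 1 := by
          calc Real.exp (γ * s) ≤ Real.exp 0 :=
            Real.exp_le_exp.2 (mul_nonpos_iff.2 (Or.inl ⟨hγ, hs⟩))
          _ = 1 := Real.exp_zero
        nlinarith [norm_nonneg w]
      have hbw' : ∀ s ≤ (0:ℝ), ‖Real.exp (γ * s) • w'‖ ≤ ‖w'‖ := by
        intro s hs
        rw [norm_smul, Real.norm_eq_abs, abs_of_pos (Real.exp_pos _)]
        have : Real.exp (γ * s) ≤ 1 := by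
          calc Real.exp (γ * s) ≤ Real.exp 0 :=
            Real.exp_le_exp.2 (mul_nonpos_iff.2 (Or.inl ⟨hγ, hs⟩))
          _ = 1 := Real.exp_zero
        nlinarith [norm_nonneg w']
      have hsub := Nint_sub νp νn hfp hfn hcw hcw' hbw hbw' i
      have hcongr : Nint νp νn (fun s => Real.exp (γ * s) • w - Real.exp (γ * s) • w') i
          = Nint νp νn (fun s => Real.exp (γ * s) • (w - w')) i := by
        refine Nint_congr νp νn (fun s _ => ?_) i
        rw [smul_sub]
      simp only [hGmdef]
      linarith [hsub, hcongr]
    have hGmlip : ∀ w w' : Fin m → ℝ, ‖Gm w - Gm w'‖ ≤ (1/2) * ‖w - w'‖ := by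
      intro w w'
      refine (pi_norm_le_iff_of_nonneg (by positivity)).2 fun i => ?_
      rw [Pi.sub_apply, Real.norm_eq_abs, hGmsub w w' i]
      have hb := Nint_bound_exp νp νn hfp hfn
        (w := fun s => Real.exp (γ * s) • (w - w'))
        ((Real.continuous_exp.comp (continuous_const.mul continuous_id)).smul continuous_const)
        hγ (norm_nonneg (w - w'))
        (fun s _ => by
          rw [norm_smul, Real.norm_eq_abs, abs_of_pos (Real.exp_pos _)]
          exact le_of_eq (mul_comm _ _)) i
      have : ‖w - w'‖ * qVal νp νn γ ≤ (1/2) * ‖w - w'‖ := by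
        nlinarith [norm_nonneg (w - w')]
      linarith [hb]
    have hGmcontr : ContractingWith (1/2 : NNReal) Gm := by
      constructor
      · rw [← NNReal.coe_lt_coe]; norm_num
      · refine LipschitzWith.of_dist_le_mul fun w w' => ?_
        rw [dist_eq_norm, dist_eq_norm]
        refine le_trans (hGmlip w w') (le_of_eq ?_)
        norm_num
    haveI : Nonempty (Fin m → ℝ) := ⟨0⟩
    set v : Fin m → ℝ := ContractingWith.fixedPoint Gm hGmcontr with hvdef
    have hvfix : Gm v = v := hGmcontr.fixedPoint_isFixedPt
    have hvi : ∀ i, v i = h t0 i + Nint νp νn (fun s => Real.exp (γ * s) • v) i :=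
      fun i => (congrFun hvfix i).symm
    have hexpv : ∀ s ≤ (0:ℝ), ‖Real.exp (γ * s) • v‖ ≤ ‖v‖ := by
      intro s hs
      rw [norm_smul, Real.norm_eq_abs, abs_of_pos (Real.exp_pos _)]
      have : Real.exp (γ * s) ≤ 1 := by
        calc Real.exp (γ * s) ≤ Real.exp 0 :=
          Real.exp_le_exp.2 (mul_nonpos_iff.2 (Or.inl ⟨hγ, hs⟩))
        _ = 1 := Real.exp_zero
      nlinarith [norm_nonneg v]
    have hvnorm : ‖v‖ ≤ 2 * ‖h t0‖ := by
      have hb : ∀ i, |v i| ≤ ‖h t0‖ + ‖v‖ * (1/4) := by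
        intro i
        rw [hvi i]
        have h1 : |h t0 i| ≤ ‖h t0‖ := by
          simpa [Real.norm_eq_abs] using norm_le_pi_norm (h t0) i
        have h2 := Nint_bound_exp νp νn hfp hfn
          (w := fun s => Real.exp (γ * s) • v)
          ((Real.continuous_exp.comp (continuous_const.mul continuous_id)).smul continuous_const)
          hγ (norm_nonneg v)
          (fun s hs => by
            rw [norm_smul, Real.norm_eq_abs, abs_of_pos (Real.exp_pos _)]
            exact le_of_eq (mul_comm _ _)) i
        have h3 : ‖v‖ * qVal νp νn γ ≤ ‖v‖ * (1/4) :=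
          mul_le_mul_of_nonneg_left hq (norm_nonneg v)
        calc |h t0 i + Nint νp νn (fun s => Real.exp (γ * s) • v) i|
            ≤ |h t0 i| + |Nint νp νn (fun s => Real.exp (γ * s) • v) i| := abs_add_le _ _
        _ ≤ ‖h t0‖ + ‖v‖ * (1/4) := by linarith [h2]
      have h4 : ‖v‖ ≤ ‖h t0‖ + ‖v‖ * (1/4) := by
        refine (pi_norm_le_iff_of_nonneg ?_).2 fun i => by
          simpa [Real.norm_eq_abs] using hb i
        positivity
      nlinarith [norm_nonneg (h t0)]
    have hvH : ‖v‖ ≤ 2 * supOn m h t0 := by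
      have h1 : ‖h t0‖ ≤ supOn m h t0 := le_supOn hh ht0 le_rfl
      linarith [hvnorm]
    -- == construct φ ==
    set φ : ℝ → Fin m → ℝ := fun s => x (t0 + s) - Real.exp (γ * s) • v with hφdef
    have hφc : Continuous φ :=
      (hx.comp (continuous_const.add continuous_id)).sub
        ((Real.continuous_exp.comp (continuous_const.mul continuous_id)).smul continuous_const)
    have hφb : ∀ s ≤ (0:ℝ), ‖φ s‖ ≤ d0 + 2 * supOn m h t0 := by
      intro s hs
      have h1 : ‖x (t0 + s)‖ ≤ d0 := hxd0 _ (by linarith)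
      have h2 : ‖Real.exp (γ * s) • v‖ ≤ 2 * supOn m h t0 := (hexpv s hs).trans hvH
      calc ‖φ s‖ ≤ ‖x (t0 + s)‖ + ‖Real.exp (γ * s) • v‖ := norm_sub_le _ _
      _ ≤ d0 + 2 * supOn m h t0 := add_le_add h1 h2
    have hDφ : ∀ i, φ 0 i = Nint νp νn φ i := by
      intro i
      have hNsub : Nint νp νn φ i
          = Nint νp νn (shift m x t0) i - Nint νp νn (fun s => Real.exp (γ * s) • v) i := by
        have hc1 : Continuous (shift m x t0) := hx.comp (continuous_const.add continuous_id)
        have hc2 : Continuous fun s : ℝ => Real.exp (γ * s) • v :=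
          (Real.continuous_exp.comp (continuous_const.mul continuous_id)).smul continuous_const
        have hb1 : ∀ s ≤ (0:ℝ), ‖shift m x t0 s‖ ≤ d0 := fun s hs => hxd0 _ (by
          linarith)
        have hb2 : ∀ s ≤ (0:ℝ), ‖Real.exp (γ * s) • v‖ ≤ ‖v‖ := hexpv
        exact Nint_sub νp νn hfp hfn (w1 := shift m x t0)
          (w2 := fun s => Real.exp (γ * s) • v) hc1 hc2 hb1 hb2 i
      have hDx := congrFun (hxD t0 ht0) i
      rw [Dop_apply] at hDx
      have hsh : shift m x t0 0 i = x t0 i := by simp [shift]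
      rw [hsh] at hDx
      have hvv := hvi i
      have hφ0 : φ 0 i = x t0 i - v i := by
        simp only [hφdef, Pi.sub_apply, Pi.smul_apply, smul_eq_mul, mul_zero, Real.exp_zero,
          add_zero, one_mul]
      rw [hφ0, hNsub]
      linarith
    -- uniform continuity of φ on the past
    have hφUC : ∀ ε > (0:ℝ), ∃ δ > (0:ℝ), ∀ s ≤ (0:ℝ), ∀ s' ≤ (0:ℝ), |s - s'| < δ →
        ‖φ s - φ s'‖ < ε := by
      intro ε hε
      obtain ⟨δ1, hδ1, hd1⟩ := ray_unifCont hx hx0 t0 (ε/2) (half_pos hε)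
      set L : ℝ := γ * ‖v‖ + 1 with hLdef
      have hL : 0 < L := by positivity
      refine ⟨min δ1 (ε / (2 * L)), by positivity, fun s hs s' hs' hss => ?_⟩
      have hdiff : φ s - φ s' = (x (t0 + s) - x (t0 + s'))
          - (Real.exp (γ * s) - Real.exp (γ * s')) • v := by
        simp only [hφdef, sub_smul]
        abel
      have h1 : ‖x (t0 + s) - x (t0 + s')‖ < ε/2 := by
        refine hd1 (t0 + s) (by linarith) (t0 + s') (by linarith) ?_
        have : t0 + s - (t0 + s') = s - s' := by ring
        rw [this]
        exact lt_of_lt_of_le hss (min_le_left _ _)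
      have h2 : ‖(Real.exp (γ * s) - Real.exp (γ * s')) • v‖ < ε/2 := by
        rw [norm_smul, Real.norm_eq_abs]
        have hlip := exp_lip hγ hs hs'
        have hss2 : |s - s'| < ε / (2 * L) := lt_of_lt_of_le hss (min_le_right _ _)
        have hγv : γ * ‖v‖ < L := by simp only [hLdef]; linarith
        have hεL : 0 < ε / (2 * L) := by positivity
        calc |Real.exp (γ * s) - Real.exp (γ * s')| * ‖v‖ ≤ γ * |s - s'| * ‖v‖ :=
              mul_le_mul_of_nonneg_right hlip (norm_nonneg v)
        _ = (γ * ‖v‖) * |s - s'| := by ring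
        _ ≤ (γ * ‖v‖) * (ε / (2 * L)) := by
              refine mul_le_mul_of_nonneg_left hss2.le (by positivity)
        _ < L * (ε / (2 * L)) := by
              refine mul_lt_mul_of_pos_right hγv hεL
        _ = ε/2 := by field_simp
      calc ‖φ s - φ s'‖ ≤ ‖x (t0 + s) - x (t0 + s')‖
            + ‖(Real.exp (γ * s) - Real.exp (γ * s')) • v‖ := by rw [hdiff]; exact norm_sub_le _ _
      _ < ε/2 + ε/2 := add_lt_add h1 h2
      _ = ε := by ring
    -- == construct y ==
    obtain ⟨y, hyc, hypast, hyray, hyeq⟩ :=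
      exists_homog νp νn hfp hfn hγ hq φ hφc hφb hDφ
    have hyBU : IsBU m y := by
      constructor
      · exact ⟨d0 + 2 * supOn m h t0, fun s hs => by rw [hypast s hs]; exact hφb s hs⟩
      · intro ε hε
        obtain ⟨δ, hδ, hd⟩ := hφUC ε hε
        refine ⟨δ, hδ, fun s hs s' hs' hss => ?_⟩
        rw [hypast s hs, hypast s' hs']
        exact hd s hs s' hs' hss
    have hyD : ∀ τ : ℝ, 0 ≤ τ → Dop m νp νn (shift m y τ) = 0 := by
      intro τ hτ
      funext i
      rw [Dop_apply]
      have hsh : shift m y τ 0 i = y τ i := by simp [shift]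
      rw [hsh, ← hyeq τ hτ i]
      simp
    have hyb : ∀ τ : ℝ, 0 ≤ τ → ‖y τ‖ ≤ c τ * (d0 + 2 * supOn m h t0) := by
      intro τ hτ
      have hsup : supNorm m y ≤ d0 + 2 * supOn m h t0 := by
        haveI : Nonempty (Set.Iic (0:ℝ)) := Set.Nonempty.to_subtype Set.nonempty_Iic
        refine ciSup_le fun s => ?_
        have hs : (s : ℝ) ≤ 0 := Set.mem_Iic.1 s.2
        rw [hypast s hs]
        exact hφb s hs
      exact (hc_stab y hyc hyBU hyD τ hτ).trans
        (mul_le_mul_of_nonneg_left hsup (hc_nonneg τ hτ))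
    -- == z and the maximum argument ==
    set z : ℝ → Fin m → ℝ := fun u => x u - y (u - t0) with hzdef
    have hzc : Continuous z := hx.sub (hyc.comp (continuous_id.sub continuous_const))
    have hzpast : ∀ u ≤ t0, z u = Real.exp (γ * (u - t0)) • v := by
      intro u hu
      have hs : u - t0 ≤ 0 := by linarith
      simp only [hzdef]
      rw [hypast _ hs]
      simp only [hφdef]
      have harg : t0 + (u - t0) = u := by ring
      rw [harg]
      abel
    have hzray : ∀ s ≤ (0:ℝ), ‖z (t0 + s)‖ ≤ 2 * supOn m h t0 := by
      intro s hs
      rw [hzpast (t0 + s) (by linarith)]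
      have harg : t0 + s - t0 = s := by ring
      rw [harg]
      exact (hexpv s hs).trans hvH
    have hzeq : ∀ τ : ℝ, t0 ≤ τ → ∀ i, z τ i = h τ i + Nint νp νn (shift m z τ) i := by
      intro τ hτ i
      have hτ0 : (0:ℝ) ≤ τ := ht0.trans hτ
      obtain ⟨Cx, hCx0, hCx⟩ := hxray τ
      obtain ⟨Cy, hCy0, hCy⟩ := hyray (τ - t0)
      have hshiftz : ∀ s : ℝ, shift m z τ s = shift m x τ s - shift m y (τ - t0) s := by
        intro s
        simp only [shift, hzdef]
        have harg : τ + s - t0 = τ - t0 + s := by ring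
        rw [harg]
      have hNz : Nint νp νn (shift m z τ) i
          = Nint νp νn (shift m x τ) i - Nint νp νn (shift m y (τ - t0)) i := by
        have hcongr : Nint νp νn (shift m z τ) i
            = Nint νp νn (fun s => shift m x τ s - shift m y (τ - t0) s) i :=
          Nint_congr νp νn (fun s _ => hshiftz s) i
        rw [hcongr]
        refine Nint_sub νp νn hfp hfn (w1 := shift m x τ) (w2 := shift m y (τ - t0))
          (hx.comp (continuous_const.add continuous_id))
          (hyc.comp (continuous_const.add continuous_id))
          (fun s hs => hCx _ (by linarith))
          (fun s hs => hCy _ (by linarith)) i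
      have hDx := congrFun (hxD τ hτ0) i
      rw [Dop_apply] at hDx
      have hsh : shift m x τ 0 i = x τ i := by simp [shift]
      rw [hsh] at hDx
      have hye := hyeq (τ - t0) (by linarith) i
      have hz : z τ i = x τ i - y (τ - t0) i := rfl
      rw [hz, hNz]
      linarith
    set G : ℝ → ℝ := fun τ => Real.exp (-(γ * (τ - t0))) * ‖z τ‖ with hGdef
    have hGc : Continuous G :=
      (Real.continuous_exp.comp ((continuous_const.mul
        (continuous_id.sub continuous_const)).neg)).mul hzc.norm
    have hGnn : ∀ τ, 0 ≤ G τ := fun τ => mul_nonneg (Real.exp_pos _).le (norm_nonneg _)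
    obtain ⟨τs, hτsmem, hτsmax⟩ := isCompact_Icc.exists_isMaxOn
      (Set.nonempty_Icc.2 htt) hGc.continuousOn
    have hτs0 : (0:ℝ) ≤ τs := ht0.trans hτsmem.1
    have hzG : ∀ u, ‖z u‖ = Real.exp (γ * (u - t0)) * G u := by
      intro u
      simp only [hGdef]
      rw [← mul_assoc, ← Real.exp_add]
      have : γ * (u - t0) + -(γ * (u - t0)) = 0 := by ring
      rw [this, Real.exp_zero, one_mul]
    have hzbound : ‖z τs‖ ≤ ‖h τs‖ + ((2 * supOn m h t0) * VVal νp νn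
        + (Real.exp (γ * (τs - t0)) * G τs) * qVal νp νn γ) := by
      have hN : ∀ i, |Nint νp νn (shift m z τs) i| ≤ (2 * supOn m h t0) * VVal νp νn
          + (Real.exp (γ * (τs - t0)) * G τs) * qVal νp νn γ := by
        intro i
        refine Nint_bound_split νp νn hfp hfn (w := shift m z τs)
          (hzc.comp (continuous_const.add continuous_id)) hγ
          (a := t0 - τs) (by linarith [hτsmem.1]) (by positivity)
          (by positivity) ?_ ?_ i
        · intro s hs
          have : τs + s ≤ t0 := by linarith
          show ‖z (τs + s)‖ ≤ 2 * supOn m h t0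
          have harg : τs + s = t0 + (τs + s - t0) := by ring
          rw [harg]
          exact hzray _ (by linarith)
        · intro s hs
          have hu1 : t0 < τs + s := by linarith [hs.1]
          have hu2 : τs + s ≤ t := by linarith [hs.2, hτsmem.2]
          show ‖z (τs + s)‖ ≤ Real.exp (γ * (τs - t0)) * G τs * Real.exp (γ * s)
          rw [hzG (τs + s)]
          have hGle : G (τs + s) ≤ G τs := hτsmax ⟨hu1.le, hu2⟩
          have hee : Real.exp (γ * (τs + s - t0))
              = Real.exp (γ * (τs - t0)) * Real.exp (γ * s) := by
            rw [← Real.exp_add]; ring_nf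
          calc Real.exp (γ * (τs + s - t0)) * G (τs + s)
              ≤ Real.exp (γ * (τs + s - t0)) * G τs :=
                mul_le_mul_of_nonneg_left hGle (Real.exp_pos _).le
          _ = Real.exp (γ * (τs - t0)) * G τs * Real.exp (γ * s) := by rw [hee]; ring
      refine (pi_norm_le_iff_of_nonneg ?_).2 fun i => ?_
      · positivity
      · rw [Real.norm_eq_abs, hzeq τs hτsmem.1 i]
        have h1 : |h τs i| ≤ ‖h τs‖ := by
          simpa [Real.norm_eq_abs] using norm_le_pi_norm (h τs) i
        calc |h τs i + Nint νp νn (shift m z τs) i|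
            ≤ |h τs i| + |Nint νp νn (shift m z τs) i| := abs_add_le _ _
        _ ≤ ‖h τs‖ + ((2 * supOn m h t0) * VVal νp νn
            + (Real.exp (γ * (τs - t0)) * G τs) * qVal νp νn γ) := add_le_add h1 (hN i)
    have hGτs : G τs ≤ (2 + 4 * VVal νp νn) * supOn m h t := by
      have hhτs : ‖h τs‖ ≤ supOn m h t := le_supOn hh hτs0 hτsmem.2
      have hexple : Real.exp (-(γ * (τs - t0))) ≤ 1 := by
        calc Real.exp (-(γ * (τs - t0))) ≤ Real.exp 0 :=
          Real.exp_le_exp.2 (neg_nonpos.2 (mul_nonneg hγ (by linarith [hτsmem.1])))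
        _ = 1 := Real.exp_zero
      have hcancel : Real.exp (-(γ * (τs - t0))) * Real.exp (γ * (τs - t0)) = 1 := by
        rw [← Real.exp_add]; simp
      have hstep : G τs ≤ Real.exp (-(γ * (τs - t0))) * (‖h τs‖
          + (2 * supOn m h t0) * VVal νp νn) + G τs * qVal νp νn γ := by
        have := mul_le_mul_of_nonneg_left hzbound (Real.exp_pos (-(γ * (τs - t0)))).le
        calc G τs = Real.exp (-(γ * (τs - t0))) * ‖z τs‖ := rfl
        _ ≤ Real.exp (-(γ * (τs - t0))) * (‖h τs‖ + ((2 * supOn m h t0) * VVal νp νn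
            + (Real.exp (γ * (τs - t0)) * G τs) * qVal νp νn γ)) := this
        _ = Real.exp (-(γ * (τs - t0))) * (‖h τs‖ + (2 * supOn m h t0) * VVal νp νn)
            + (Real.exp (-(γ * (τs - t0))) * Real.exp (γ * (τs - t0)))
              * (G τs * qVal νp νn γ) := by ring
        _ = Real.exp (-(γ * (τs - t0))) * (‖h τs‖
            + (2 * supOn m h t0) * VVal νp νn) + G τs * qVal νp νn γ := by rw [hcancel]; ring
      have hbr : 0 ≤ ‖h τs‖ + (2 * supOn m h t0) * VVal νp νn := by positivity
      have hstep2 : G τs ≤ (‖h τs‖ + (2 * supOn m h t0) * VVal νp νn) + G τs * (1/4) := by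
        have e1 : Real.exp (-(γ * (τs - t0))) * (‖h τs‖ + (2 * supOn m h t0) * VVal νp νn)
            ≤ ‖h τs‖ + (2 * supOn m h t0) * VVal νp νn := by
          nlinarith [Real.exp_pos (-(γ * (τs - t0)))]
        have e2 : G τs * qVal νp νn γ ≤ G τs * (1/4) :=
          mul_le_mul_of_nonneg_left hq (hGnn τs)
        linarith
      have hfinal : G τs ≤ 2 * (‖h τs‖ + (2 * supOn m h t0) * VVal νp νn) := by
        nlinarith [hGnn τs]
      have : ‖h τs‖ + (2 * supOn m h t0) * VVal νp νn
          ≤ supOn m h t + (2 * supOn m h t) * VVal νp νn := by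
        have := mul_le_mul_of_nonneg_right (by linarith [hmono] : 2 * supOn m h t0 ≤ 2 * supOn m h t) hVn
        linarith
      nlinarith [hHt]
    have hzt : ‖z t‖ ≤ A * supOn m h t := by
      rw [hzG t]
      have h1 : G t ≤ G τs := hτsmax ⟨htt, le_rfl⟩
      have h2 : Real.exp (γ * (t - t0)) ≤ Real.exp (γ * T) :=
        Real.exp_le_exp.2 (mul_le_mul_of_nonneg_left hT' hγ)
      calc Real.exp (γ * (t - t0)) * G t ≤ Real.exp (γ * (t - t0)) * G τs :=
            mul_le_mul_of_nonneg_left h1 (Real.exp_pos _).le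
      _ ≤ Real.exp (γ * (t - t0)) * ((2 + 4 * VVal νp νn) * supOn m h t) :=
            mul_le_mul_of_nonneg_left hGτs (Real.exp_pos _).le
      _ ≤ Real.exp (γ * T) * ((2 + 4 * VVal νp νn) * supOn m h t) := by
            refine mul_le_mul_of_nonneg_right h2 (by positivity)
      _ = A * supOn m h t := by rw [hAdef]; ring
    -- conclude key
    have hxsplit : x t = y (t - t0) + z t := by
      simp only [hzdef]
      abel
    calc ‖x t‖ = ‖y (t - t0) + z t‖ := by rw [hxsplit]
    _ ≤ ‖y (t - t0)‖ + ‖z t‖ := norm_add_le _ _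
    _ ≤ c (t - t0) * (d0 + 2 * supOn m h t0) + A * supOn m h t :=
          add_le_add (hyb (t - t0) (by linarith)) hzt
  -- ===== INDUCTION =====
  have main : ∀ n : ℕ, ∀ t : ℝ, 0 ≤ t → t ≤ (n : ℝ) * T →
      ‖x t‖ ≤ (2 * A + 2) * supOn m h t := by
    intro n
    induction n with
    | zero =>
      intro t ht ht'
      have ht00 : t = 0 := le_antisymm (by simpa using ht') ht
      subst ht00
      rw [hH00, hx0 0 le_rfl]
      simp
    | succ n ih =>
      intro t ht ht'
      have hHt : 0 ≤ supOn m h t := supOn_nonneg hh ht hh0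
      rcases le_or_gt t T with hcase | hcase
      · have hk := key 0 t le_rfl ht (by linarith) 0 (fun u hu hut => by
          have : u = 0 := le_antisymm hut hu
          rw [this, hx0 0 le_rfl]
          simp)
        rw [sub_zero, hH00] at hk
        have : c t * (0 + 2 * 0) = 0 := by ring
        rw [this] at hk  -- hk might already be simplified; fallback below
        nlinarith [hk]
      · set t0 : ℝ := t - T with ht0def
        have ht0 : 0 ≤ t0 := by simp only [ht0def]; linarith
        have ht0n : t0 ≤ (n : ℝ) * T := by
          simp only [ht0def]
          push_cast at ht' ⊢
          linarith
        have hH0 : 0 ≤ supOn m h t0 := supOn_nonneg hh ht0 hh0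
        have hmono : supOn m h t0 ≤ supOn m h t := supOn_mono hh ht0 (by
          simp only [ht0def]; linarith)
        have hd0 : ∀ u : ℝ, 0 ≤ u → u ≤ t0 → ‖x u‖ ≤ (2 * A + 2) * supOn m h t0 := by
          intro u hu hut
          have := ih u hu (hut.trans ht0n)
          refine this.trans ?_
          have : supOn m h u ≤ supOn m h t0 := supOn_mono hh hu hut
          nlinarith [hApos]
        have hk := key t0 t ht0 (by simp only [ht0def]; linarith)
          (by simp only [ht0def]; linarith) ((2 * A + 2) * supOn m h t0) hd0
        have hTT : t - t0 = T := by simp only [ht0def]; ring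
        rw [hTT] at hk
        have hcTn : 0 ≤ c T := hc_nonneg T (by linarith)
        have hc1 : c T * ((2 * A + 2) * supOn m h t0 + 2 * supOn m h t0)
            ≤ (1/2) * ((2 * A + 2) * supOn m h t0 + 2 * supOn m h t0) := by
          refine mul_le_mul_of_nonneg_right hcT (by positivity)
        have hc2 : (1/2) * ((2 * A + 2) * supOn m h t0 + 2 * supOn m h t0)
            = (A + 2) * supOn m h t0 := by ring
        have hc3 : (A + 2) * supOn m h t0 ≤ (A + 2) * supOn m h t := by
          nlinarith [hApos]
        nlinarith [hk]
  intro t ht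
  obtain ⟨n, hn⟩ := exists_nat_ge t
  refine main n t ht ?_
  have : (n : ℝ) * 1 ≤ (n : ℝ) * T := by
    refine mul_le_mul_of_nonneg_left hT1 (Nat.cast_nonneg n)
  linarith
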